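/- Let P = (E, ρ) be a (q,m)-polymatroid with nullity function ν and conullity function ν*. Then P is a (q,m)-demi-polymatroid, and moreover both (E, ν) and (E, ν*) are (q,m)-demi-polymatroids. -/

import Mathlib

set_option linter.unusedSectionVars false

open Module Matrix

variable {F : Type*} [Field F] [Fintype F] {n : ℕ}

/-- The orthogonal complement of a subspace of `𝔽_q^n` with respect to the standard dot product. -/
def perp (X : Submodule F (Fin n → F)) : Submodule F (Fin n → F) where
  carrier := {x | ∀ y ∈ X, dotProduct x y = 0}
  add_mem' := fun {a b} ha hb y hy => by
    rw [Set.mem_setOf_eq] at *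
    rw [add_dotProduct, ha y hy, hb y hy, add_zero]
  zero_mem' := fun y hy => zero_dotProduct (v := y)
  smul_mem' := fun c a ha y hy => by
    rw [Set.mem_setOf_eq] at *
    rw [smul_dotProduct, ha y hy, smul_zero]

/-- The dual rank function `ρ*(X) = ρ(X^⊥) + m·dim X − ρ(E)`. -/
noncomputable def dualRho (m : ℕ) (rho : Submodule F (Fin n → F) → ℤ) (X : Submodule F (Fin n → F)) : ℤ :=
  rho (perp X) + (m : ℤ) * (finrank F X : ℤ) - rho ⊤

/-- The nullity function `ν(X) = m·dim X − ρ(X)`. -/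
noncomputable def nullity (m : ℕ) (rho : Submodule F (Fin n → F) → ℤ) (X : Submodule F (Fin n → F)) : ℤ :=
  (m : ℤ) * (finrank F X : ℤ) - rho X

/-- The conullity function `ν*(X) = ρ(E) − ρ(X^⊥)`. -/
def coNull (rho : Submodule F (Fin n → F) → ℤ) (X : Submodule F (Fin n → F)) : ℤ :=
  rho ⊤ - rho (perp X)

/-- The `r`-th generalized weight `d_r = min{dim X : ν*(X) ≥ r}`. -/
noncomputable def genW (rho : Submodule F (Fin n → F) → ℤ) (r : ℤ) : ℕ :=
  sInf {d : ℕ | ∃ X : Submodule F (Fin n → F), finrank F X = d ∧ r ≤ coNull rho X}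

/-- `h(x) = max{ν(X) : dim X = x}`. -/
noncomputable def hFun (m : ℕ) (rho : Submodule F (Fin n → F) → ℤ) (x : ℕ) : ℤ :=
  sSup {v : ℤ | ∃ X : Submodule F (Fin n → F), finrank F X = x ∧ v = nullity m rho X}

/-- `h*(x) = max{ν*(X) : dim X = x}`. -/
noncomputable def hStar (rho : Submodule F (Fin n → F) → ℤ) (x : ℕ) : ℤ :=
  sSup {v : ℤ | ∃ X : Submodule F (Fin n → F), finrank F X = x ∧ v = coNull rho X}

/-- A `(q,m)`-polymatroid on `E = 𝔽_q^n`. -/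
structure QMPolymatroid (F : Type*) [Field F] [Fintype F] (n m : ℕ) where
  rho : Submodule F (Fin n → F) → ℤ
  rho_nonneg : ∀ X, 0 ≤ rho X
  rho_le : ∀ X, rho X ≤ (m : ℤ) * (finrank F X : ℤ)
  rho_mono : ∀ ⦃X Y⦄, X ≤ Y → rho X ≤ rho Y
  rho_submodular : ∀ X Y, rho (X ⊔ Y) + rho (X ⊓ Y) ≤ rho X + rho Y

/-- A `(q,m)`-demi-polymatroid on `E = 𝔽_q^n`. -/
structure QMDemiPolymatroid (F : Type*) [Field F] [Fintype F] (n m : ℕ) where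
  rho : Submodule F (Fin n → F) → ℤ
  rho_nonneg : ∀ X, 0 ≤ rho X
  rho_le : ∀ X, rho X ≤ (m : ℤ) * (finrank F X : ℤ)
  rho_mono : ∀ ⦃X Y⦄, X ≤ Y → rho X ≤ rho Y
  dual_nonneg : ∀ X, 0 ≤ dualRho m rho X
  dual_le : ∀ X, dualRho m rho X ≤ (m : ℤ) * (finrank F X : ℤ)
  dual_mono : ∀ ⦃X Y⦄, X ≤ Y → dualRho m rho X ≤ dualRho m rho Y

section Codes

variable {m : ℕ}

/-- The row space of a matrix. -/
def rowSpace (A : Matrix (Fin m) (Fin n) F) : Submodule F (Fin n → F) :=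
  Submodule.span F (Set.range A)

theorem rowSpace_le_iff (A : Matrix (Fin m) (Fin n) F) (X : Submodule F (Fin n → F)) :
    rowSpace A ≤ X ↔ ∀ i, A i ∈ X := by
  rw [rowSpace, Submodule.span_le]; exact Set.range_subset_iff

/-- Matrices whose row space is contained in `X`. -/
def supportedOn (m : ℕ) (X : Submodule F (Fin n → F)) :
    Submodule F (Matrix (Fin m) (Fin n) F) where
  carrier := {A | rowSpace A ≤ X}
  add_mem' := fun {A B} hA hB => by
    rw [Set.mem_setOf_eq, rowSpace_le_iff] at *
    exact fun i => X.add_mem (hA i) (hB i)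
  zero_mem' := by
    rw [Set.mem_setOf_eq, rowSpace_le_iff]
    exact fun i => X.zero_mem
  smul_mem' := fun c A hA => by
    rw [Set.mem_setOf_eq, rowSpace_le_iff] at *
    exact fun i => X.smul_mem c (hA i)

/-- `C(X)`: the subspace of a Delsarte code `C` of matrices whose row space lies in `X`. -/
def subcode (C : Submodule F (Matrix (Fin m) (Fin n) F)) (X : Submodule F (Fin n → F)) :
    Submodule F (Matrix (Fin m) (Fin n) F) :=
  C ⊓ supportedOn m X

/-- The rank function `ρ_C(X) = dim C − dim C(X^⊥)` of a Delsarte code. -/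
noncomputable def rhoC (C : Submodule F (Matrix (Fin m) (Fin n) F))
    (X : Submodule F (Fin n → F)) : ℤ :=
  (finrank F C : ℤ) - (finrank F (subcode C (perp X)) : ℤ)

/-- The generalized weight `d_r(C) = min{dim X : dim C(X) ≥ r}` of a Delsarte code. -/
noncomputable def codeWeight (C : Submodule F (Matrix (Fin m) (Fin n) F)) (r : ℤ) : ℕ :=
  sInf {d : ℕ | ∃ X : Submodule F (Fin n → F),
    finrank F X = d ∧ r ≤ (finrank F (subcode C X) : ℤ)}

/-- The trace dual of a Delsarte code. -/
def traceDual (C : Submodule F (Matrix (Fin m) (Fin n) F)) :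
    Submodule F (Matrix (Fin m) (Fin n) F) where
  carrier := {N | ∀ M ∈ C, Matrix.trace (M * Nᵀ) = 0}
  add_mem' := fun {N₁ N₂} h1 h2 M hM => by
    rw [Matrix.transpose_add, Matrix.mul_add, Matrix.trace_add, h1 M hM, h2 M hM, add_zero]
  zero_mem' := fun M hM => by simp
  smul_mem' := fun c N hN M hM => by
    rw [Matrix.transpose_smul, Matrix.mul_smul, Matrix.trace_smul, hN M hM, smul_zero]

/-- The transposed code `Cᵀ = {Mᵗ : M ∈ C}` of a code of square matrices. -/
def transposeCode (C : Submodule F (Matrix (Fin n) (Fin n) F)) :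
    Submodule F (Matrix (Fin n) (Fin n) F) where
  carrier := {A | Aᵀ ∈ C}
  add_mem' := fun {A B} hA hB => by
    rw [Set.mem_setOf_eq, Matrix.transpose_add]; exact C.add_mem hA hB
  zero_mem' := by
    rw [Set.mem_setOf_eq, Matrix.transpose_zero]; exact C.zero_mem
  smul_mem' := fun c A hA => by
    rw [Set.mem_setOf_eq, Matrix.transpose_smul]; exact C.smul_mem c hA

/-- The maximum rank of a matrix in a subspace of matrices. -/
noncomputable def maxrank (A : Submodule F (Matrix (Fin m) (Fin n) F)) : ℕ :=
  sSup {r : ℕ | ∃ M ∈ A, M.rank = r}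

/-- An optimal anticode: a subspace `𝒜` of `𝕄` with `dim 𝒜 = m · maxrank 𝒜`. -/
def IsOptimalAnticode (A : Submodule F (Matrix (Fin m) (Fin n) F)) : Prop :=
  finrank F A = m * maxrank A

/-- Ravagnani's generalized weight `a_r(C)`. -/
noncomputable def aWeight (C : Submodule F (Matrix (Fin m) (Fin n) F)) (r : ℤ) : ℕ :=
  (sInf {d : ℕ | ∃ A : Submodule F (Matrix (Fin m) (Fin n) F),
    IsOptimalAnticode A ∧ finrank F A = d ∧ r ≤ (finrank F (A ⊓ C : Submodule F _) : ℤ)}) / m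

end Codes


section Aux

variable {F : Type*} [Field F] [Fintype F] {n : ℕ}

lemma aux_toDual_dot (x y : Fin n → F) :
    (Pi.basisFun F (Fin n)).toDual x y = dotProduct x y := by
  have h : y = ∑ i, y i • (Pi.basisFun F (Fin n)) i := by
    simp only [Pi.basisFun_apply]
    rw [← Finset.univ_sum_single y]
    congr 1; ext i; rw [← Pi.single_smul']; simp
  conv_lhs => rw [h]
  rw [map_sum]
  have h2 : dotProduct x y = ∑ i, x i * y i := rfl
  rw [h2]
  congr 1; ext i
  rw [_root_.map_smul, smul_eq_mul, Basis.toDual_eq_repr]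
  simp [Pi.basisFun_repr, mul_comm]

lemma aux_perp_eq (X : Submodule F (Fin n → F)) :
    perp X = X.dualAnnihilator.comap
      ((Pi.basisFun F (Fin n)).toDualEquiv : (Fin n → F) →ₗ[F] Module.Dual F (Fin n → F)) := by
  ext x
  simp only [perp, Submodule.mem_mk, AddSubmonoid.mem_mk, AddSubsemigroup.mem_mk,
    Set.mem_setOf_eq, Submodule.mem_comap, LinearEquiv.coe_coe, Basis.toDualEquiv_apply,
    Submodule.mem_dualAnnihilator]
  constructor
  · intro h y hy; rw [aux_toDual_dot]; exact h y hy
  · intro h y hy; rw [← aux_toDual_dot]; exact h y hy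

lemma aux_finrank_add_perp (X : Submodule F (Fin n → F)) :
    finrank F X + finrank F (perp X) = n := by
  have h1 : finrank F (perp X) = finrank F X.dualAnnihilator := by
    rw [aux_perp_eq]
    exact LinearEquiv.finrank_eq
      (LinearEquiv.ofSubmodule' (Pi.basisFun F (Fin n)).toDualEquiv X.dualAnnihilator)
  have h2 : finrank F X.dualAnnihilator = finrank F ((Fin n → F) ⧸ X) :=
    (LinearEquiv.finrank_eq (Subspace.quotEquivAnnihilator X)).symm
  have h3 : finrank F ((Fin n → F) ⧸ X) + finrank F X = finrank F (Fin n → F) :=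
    Submodule.finrank_quotient_add_finrank X
  have h4 : finrank F (Fin n → F) = n := by simp
  omega

lemma aux_perp_anti {X Y : Submodule F (Fin n → F)} (h : X ≤ Y) : perp Y ≤ perp X :=
  fun _ hx y hy => hx y (h hy)

lemma aux_le_perp_perp (X : Submodule F (Fin n → F)) : X ≤ perp (perp X) := by
  intro x hx y hy
  rw [dotProduct_comm]
  exact hy x hx

lemma aux_perp_perp (X : Submodule F (Fin n → F)) : perp (perp X) = X := by
  have h1 := aux_finrank_add_perp X
  have h2 := aux_finrank_add_perp (perp X)
  exact (Submodule.eq_of_le_of_finrank_le (aux_le_perp_perp X) (by omega)).symm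

lemma aux_perp_bot : perp (⊥ : Submodule F (Fin n → F)) = ⊤ := by
  ext x
  simp only [Submodule.mem_top, iff_true]
  intro y hy
  rw [Submodule.mem_bot] at hy
  rw [hy, dotProduct_zero]

lemma aux_perp_top : perp (⊤ : Submodule F (Fin n → F)) = ⊥ := by
  rw [← aux_perp_bot (F := F) (n := n), aux_perp_perp]

lemma aux_exists_compl_le {A B : Submodule F (Fin n → F)} (h : A ≤ B) :
    ∃ W : Submodule F (Fin n → F), A ⊔ W = B ∧ finrank F A + finrank F W = finrank F B := by
  obtain ⟨q, hq⟩ := Submodule.exists_isCompl (A.comap B.subtype)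
  refine ⟨q.map B.subtype, ?_, ?_⟩
  · have hA : Submodule.map B.subtype (A.comap B.subtype) = A := by
      rw [Submodule.map_comap_subtype, inf_eq_right.mpr h]
    rw [← hA, ← Submodule.map_sup, hq.sup_eq_top, Submodule.map_top, Submodule.range_subtype]
  · have e1 : finrank F (A.comap B.subtype) + finrank F q = finrank F B :=
      Submodule.finrank_add_eq_of_isCompl hq
    have e2 : finrank F (A.comap B.subtype) = finrank F A := by
      have := Submodule.finrank_map_subtype_eq B (A.comap B.subtype)
      rw [Submodule.map_comap_subtype, inf_eq_right.mpr h] at this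
      omega
    have e3 : finrank F (q.map B.subtype) = finrank F q :=
      Submodule.finrank_map_subtype_eq B q
    omega

lemma aux_rho_le_rho_add {m : ℕ} (P : QMPolymatroid F n m)
    {A B : Submodule F (Fin n → F)} (h : A ≤ B) :
    P.rho B ≤ P.rho A + (m : ℤ) * ((finrank F B : ℤ) - (finrank F A : ℤ)) := by
  obtain ⟨W, hW, hfr⟩ := aux_exists_compl_le h
  have h1 := P.rho_submodular A W
  rw [hW] at h1
  have h2 := P.rho_le W
  have h3 := P.rho_nonneg (A ⊓ W)
  have h4 : (finrank F A : ℤ) + (finrank F W : ℤ) = (finrank F B : ℤ) := by exact_mod_cast hfr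
  have h5 : (m : ℤ) * ((finrank F B : ℤ) - (finrank F A : ℤ)) = (m : ℤ) * (finrank F W : ℤ) := by
    rw [← h4]; ring
  linarith

end Aux

/-- every `(q,m)`-polymatroid is a `(q,m)`-demi-polymatroid, and its nullity
and conullity functions are rank functions of `(q,m)`-demi-polymatroids. -/
theorem polymatroid_nullity_conullity_demi {F : Type*} [Field F] [Fintype F] {n m : ℕ}
    (P : QMPolymatroid F n m) :
    (∃ D : QMDemiPolymatroid F n m, D.rho = P.rho) ∧
    (∃ D : QMDemiPolymatroid F n m, D.rho = nullity m P.rho) ∧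
    (∃ D : QMDemiPolymatroid F n m, D.rho = coNull P.rho) := by
  have hperpfr : ∀ X : Submodule F (Fin n → F),
      (finrank F (perp X) : ℤ) = (n : ℤ) - (finrank F X : ℤ) := by
    intro X
    have := aux_finrank_add_perp X
    push_cast [← this]
    ring
  have htop : (finrank F (⊤ : Submodule F (Fin n → F)) : ℤ) = (n : ℤ) := by
    rw [finrank_top]; simp
  -- key : ρ(⊤) ≤ ρ(X^⊥) + m·dim X
  have key : ∀ X : Submodule F (Fin n → F),
      P.rho ⊤ ≤ P.rho (perp X) + (m : ℤ) * (finrank F X : ℤ) := by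
    intro X
    have h := aux_rho_le_rho_add P (le_top : perp X ≤ ⊤)
    have e : (finrank F (⊤ : Submodule F (Fin n → F)) : ℤ) - (finrank F (perp X) : ℤ)
        = (finrank F X : ℤ) := by rw [htop, hperpfr X]; ring
    rw [e] at h
    exact h
  have hbot : P.rho ⊥ = 0 := by
    have h1 := P.rho_le ⊥
    have h2 := P.rho_nonneg ⊥
    rw [finrank_bot] at h1
    simpa using le_antisymm (by simpa using h1) h2
  -- monotonicity-type bound for differences
  have diffbound : ∀ ⦃X Y : Submodule F (Fin n → F)⦄, X ≤ Y →
      P.rho Y ≤ P.rho X + (m : ℤ) * (finrank F Y : ℤ) - (m : ℤ) * (finrank F X : ℤ) := by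
    intro X Y h
    have := aux_rho_le_rho_add P h
    rw [mul_sub] at this
    linarith
  -- bound for perps
  have perpdiff : ∀ ⦃X Y : Submodule F (Fin n → F)⦄, X ≤ Y →
      P.rho (perp X) ≤ P.rho (perp Y) + (m : ℤ) * (finrank F Y : ℤ)
        - (m : ℤ) * (finrank F X : ℤ) := by
    intro X Y h
    have h1 := aux_rho_le_rho_add P (aux_perp_anti h)
    have e : (finrank F (perp X) : ℤ) - (finrank F (perp Y) : ℤ)
        = (finrank F Y : ℤ) - (finrank F X : ℤ) := by rw [hperpfr X, hperpfr Y]; ring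
    rw [e, mul_sub] at h1
    linarith
  refine ⟨⟨⟨P.rho, P.rho_nonneg, P.rho_le, P.rho_mono, ?_, ?_, ?_⟩, rfl⟩, ?_, ?_⟩
  · -- dual_nonneg for ρ
    intro X
    simp only [dualRho]
    linarith [key X]
  · -- dual_le for ρ
    intro X
    simp only [dualRho]
    linarith [P.rho_mono (le_top : perp X ≤ ⊤)]
  · -- dual_mono for ρ
    intro X Y h
    simp only [dualRho]
    linarith [perpdiff h]
  · -- nullity
    have hd : ∀ X : Submodule F (Fin n → F),
        dualRho m (nullity m P.rho) X = P.rho ⊤ - P.rho (perp X) := by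
      intro X
      simp only [dualRho, nullity]
      rw [hperpfr X, htop]
      ring
    refine ⟨⟨nullity m P.rho, ?_, ?_, ?_, ?_, ?_, ?_⟩, rfl⟩
    · intro X; simp only [nullity]; linarith [P.rho_le X]
    · intro X; simp only [nullity]; linarith [P.rho_nonneg X]
    · intro X Y h; simp only [nullity]; linarith [diffbound h]
    · intro X; rw [hd X]; linarith [P.rho_mono (le_top : perp X ≤ ⊤)]
    · intro X; rw [hd X]; linarith [key X]
    · intro X Y h; rw [hd X, hd Y]
      linarith [P.rho_mono (aux_perp_anti h)]
  · -- conullity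
    have hd : ∀ X : Submodule F (Fin n → F),
        dualRho m (coNull P.rho) X = (m : ℤ) * (finrank F X : ℤ) - P.rho X := by
      intro X
      simp only [dualRho, coNull]
      rw [aux_perp_perp, aux_perp_top, hbot]
      ring
    refine ⟨⟨coNull P.rho, ?_, ?_, ?_, ?_, ?_, ?_⟩, rfl⟩
    · intro X; simp only [coNull]; linarith [P.rho_mono (le_top : perp X ≤ ⊤)]
    · intro X; simp only [coNull]; linarith [key X]
    · intro X Y h; simp only [coNull]; linarith [P.rho_mono (aux_perp_anti h)]
    · intro X; rw [hd X]; linarith [P.rho_le X]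
    · intro X; rw [hd X]; linarith [P.rho_nonneg X]
    · intro X Y h; rw [hd X, hd Y]; linarith [diffbound h]
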